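/- Let φ be a white-noise random dynamical system on a complete separable metric space (E,d) with invariant probability measure ρ satisfying weak local pointwise stability on a Borel set U with ρ(U) > 0. Let μ : Ω → P(E) be an F_0-measurable random Borel probability measure on E such that E[μ_ω(B)] = ρ(B) for every Borel set B and such that for each t ≥ 0 the pushforward of μ_ω under φ_t(ω,·) equals μ_{θ_t ω} almost surely. Then with positive probability μ_ω has at least one atom; equivalently, it is not the case that (μ_ω ⊗ μ_ω)(Δ) = 0 almost surely, where Δ denotes the diagonal in E × E. -/

import Mathlib

open MeasureTheory ProbabilityTheory Filter Topology
open scoped ENNReal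

/-- A white-noise (filtered) random dynamical system on a metric space `E` over an ergodic
metric dynamical system `θ` on a probability space `(Ω, F, P)`. -/
structure WhiteNoiseRDS (Ω E : Type) [MeasurableSpace Ω] [MetricSpace E]
    [MeasurableSpace E] [BorelSpace E] where
  /-- the underlying probability measure -/
  P : Measure Ω
  P_prob : IsProbabilityMeasure P
  /-- the metric dynamical system (group of shifts) -/
  θ : ℝ → Ω → Ω
  θ_meas : ∀ t, Measurable (θ t)
  θ_zero : ∀ ω, θ 0 ω = ω
  θ_add : ∀ s t : ℝ, ∀ ω, θ (s + t) ω = θ s (θ t ω)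
  θ_preserves : ∀ t, MeasurePreserving (θ t) P P
  θ_ergodic : ∀ A : Set Ω, MeasurableSet A → (∀ t, θ t ⁻¹' A = A) → P A = 0 ∨ P A = 1
  /-- the cocycle -/
  φ : ℝ → Ω → E → E
  φ_meas : Measurable fun p : ℝ × Ω × E => φ p.1 p.2.1 p.2.2
  φ_zero : ∀ ω x, φ 0 ω x = x
  φ_cocycle : ∀ s t : ℝ, 0 ≤ s → 0 ≤ t → ∀ ω x, φ (t + s) ω x = φ t (θ s ω) (φ s ω x)
  φ_cont : ∀ s : ℝ, 0 ≤ s → ∀ ω, Continuous fun x => φ s ω x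
  /-- two-parameter filtration -/
  F : ℝ → ℝ → MeasurableSpace Ω
  F_le : ∀ s t : ℝ, F s t ≤ ‹MeasurableSpace Ω›
  F_mono : ∀ s t u v : ℝ, s ≤ t → t ≤ u → u ≤ v → F t u ≤ F s v
  F_shift : ∀ r s t : ℝ, F (s + r) (t + r) = MeasurableSpace.comap (θ r) (F s t)
  F_indep : ∀ (n : ℕ) (ts : Fin (n + 1) → ℝ), Monotone ts →
    iIndep (fun i : Fin n => F (ts i.castSucc) (ts i.succ)) P
  φ_adapted : ∀ s : ℝ, 0 ≤ s → ∀ x : E, Measurable[F 0 s] fun ω => φ s ω x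

namespace WhiteNoiseRDS

variable {Ω E : Type} [MeasurableSpace Ω] [MetricSpace E] [MeasurableSpace E] [BorelSpace E]

/-- `F_0`: the smallest σ-algebra containing all `F s 0`, `s ≤ 0`. -/
def F0 (R : WhiteNoiseRDS Ω E) : MeasurableSpace Ω := ⨆ s ∈ Set.Iic (0 : ℝ), R.F s 0

/-- `ρ` is an invariant probability measure for the Markov semigroup associated to `φ`. -/
def Invariant (R : WhiteNoiseRDS Ω E) (ρ : Measure E) : Prop :=
  ∀ t : ℝ, 0 ≤ t → ∀ f : BoundedContinuousFunction E ℝ,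
    ∫ x, (∫ ω, f (R.φ t ω x) ∂ R.P) ∂ρ = ∫ x, f x ∂ρ

/-- `φ` is strongly mixing w.r.t. `ρ`: the law of `φ_t(·,x)` converges weakly to `ρ`. -/
def StronglyMixing (R : WhiteNoiseRDS Ω E) (ρ : Measure E) : Prop :=
  ∀ x : E, ∀ f : BoundedContinuousFunction E ℝ,
    Tendsto (fun t : ℝ => ∫ ω, f (R.φ t ω x) ∂ R.P) atTop (𝓝 (∫ y, f y ∂ρ))

/-- Weak global pointwise stability: there is a Borel set `U` of full `ρ`-measure and times
`t n ↑ ∞` such that any two points of `U` come `η`-close along `t n` with probability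
bounded below by some `δ(x,y) > 0`. -/
def WeakGlobalPointwiseStability (R : WhiteNoiseRDS Ω E) (ρ : Measure E) : Prop :=
  ∃ U : Set E, MeasurableSet U ∧ ρ U = 1 ∧
    ∃ t : ℕ → ℝ, StrictMono t ∧ Tendsto t atTop atTop ∧
      ∀ x ∈ U, ∀ y ∈ U, ∃ δ : ℝ≥0∞, 0 < δ ∧ ∀ η : ℝ, 0 < η →
        δ ≤ liminf (fun n => R.P {ω | dist (R.φ (t n) ω x) (R.φ (t n) ω y) ≤ η}) atTop

/-- Weak synchronization: there is an `F_0`-measurable random point `a` which is invariant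
under the flow and attracts every deterministic point in probability (in the pullback sense). -/
def WeakSynchronization (R : WhiteNoiseRDS Ω E) : Prop :=
  ∃ a : Ω → E, Measurable[R.F0] a ∧
    (∀ t : ℝ, 0 ≤ t → ∀ᵐ ω ∂ R.P, R.φ t ω (a ω) = a (R.θ t ω)) ∧
    ∀ x : E, ∀ ε : ℝ, 0 < ε →
      Tendsto (fun t : ℝ => R.P {ω | ε ≤ dist (R.φ t (R.θ (-t) ω) x) (a ω)}) atTop (𝓝 0)

end WhiteNoiseRDS

/-- Weak local pointwise stability on a Borel set `U` with `ρ(U) > 0`. -/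
def WhiteNoiseRDS.WeakLocalPointwiseStabilityOn {Ω E : Type} [MeasurableSpace Ω]
    [MetricSpace E] [MeasurableSpace E] [BorelSpace E]
    (R : WhiteNoiseRDS Ω E) (ρ : MeasureTheory.Measure E) (U : Set E) : Prop :=
  MeasurableSet U ∧ 0 < ρ U ∧
    ∃ t : ℕ → ℝ, StrictMono t ∧ Filter.Tendsto t Filter.atTop Filter.atTop ∧
      ∀ x ∈ U, ∀ y ∈ U, ∃ δ : ℝ≥0∞, 0 < δ ∧ ∀ η : ℝ, 0 < η →
        δ ≤ Filter.liminf
          (fun n => R.P {ω | dist (R.φ (t n) ω x) (R.φ (t n) ω y) ≤ η}) Filter.atTop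

section AuxLemmas

open MeasurableSpace

/-- Shifting the index leaves a `liminf` along `atTop` unchanged. -/
private lemma liminf_shift_aux (a : ℕ → ℝ≥0∞) (N : ℕ) :
    Filter.liminf (fun n => a (n + N)) Filter.atTop = Filter.liminf a Filter.atTop := by
  show Filter.limsInf (Filter.map (a ∘ fun n => n + N) Filter.atTop)
      = Filter.limsInf (Filter.map a Filter.atTop)
  rw [← Filter.map_map, Filter.map_add_atTop_eq_nat]

namespace WhiteNoiseRDS

variable {Ω E : Type} [MeasurableSpace Ω] [MetricSpace E] [MeasurableSpace E] [BorelSpace E]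

private lemma F0_le (R : WhiteNoiseRDS Ω E) : R.F0 ≤ ‹MeasurableSpace Ω› :=
  iSup₂_le fun s _ => R.F_le s 0

private lemma indep_F0 (R : WhiteNoiseRDS Ω E) {t : ℝ} (ht : 0 ≤ t) :
    Indep R.F0 (R.F 0 t) R.P := by
  haveI := R.P_prob
  have base : ∀ s : Set.Iic (0 : ℝ), Indep (R.F s 0) (R.F 0 t) R.P := by
    rintro ⟨s, hs⟩
    have hs' : s ≤ 0 := hs
    have hmono : Monotone (![s, 0, t] : Fin 3 → ℝ) := by
      intro i j hij
      fin_cases i <;> fin_cases j <;>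
        simp_all [Fin.le_def, Matrix.cons_val_zero, Matrix.cons_val_one, Matrix.head_cons] <;>
        try linarith
    have h := R.F_indep 2 ![s, 0, t] hmono
    have h2 := h.indep (i := (0 : Fin 2)) (j := (1 : Fin 2)) (by decide)
    have e0 : R.F (![s, 0, t] (Fin.castSucc 0)) (![s, 0, t] (Fin.succ 0)) = R.F s 0 := by
      norm_num
    have e1 : R.F (![s, 0, t] (Fin.castSucc 1)) (![s, 0, t] (Fin.succ 1)) = R.F 0 t := by
      norm_num
      rfl
    rwa [e0, e1] at h2
  have hF0 : R.F0 = ⨆ s : Set.Iic (0 : ℝ), R.F s 0 := by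
    rw [WhiteNoiseRDS.F0, iSup_subtype]
  rw [hF0]
  refine ProbabilityTheory.indep_iSup_of_directed_le base (fun s => R.F_le _ _)
    (R.F_le 0 t) ?_
  rintro ⟨s₁, hs₁⟩ ⟨s₂, hs₂⟩
  refine ⟨⟨min s₁ s₂, Set.mem_Iic.mpr (le_trans (min_le_left s₁ s₂) (Set.mem_Iic.mp hs₁))⟩, ?_, ?_⟩
  · exact R.F_mono _ _ _ _ (min_le_left _ _) hs₁ le_rfl
  · exact R.F_mono _ _ _ _ (min_le_right _ _) hs₂ le_rfl

end WhiteNoiseRDS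

/-- Measurability of the two-point contraction event w.r.t. a product σ-algebra. -/
private lemma S_measurable {Ω E : Type} [MeasurableSpace Ω] [MetricSpace E]
    [SecondCountableTopology E] [MeasurableSpace E] [BorelSpace E]
    (φ : Ω → E → E) (hcont : ∀ ω, Continuous (φ ω))
    (hmeas : ∀ x, Measurable fun ω => φ ω x) (η : ℝ) :
    MeasurableSet {p : Ω × E × E | dist (φ p.1 p.2.1) (φ p.1 p.2.2) ≤ η} := by
  have huu : Measurable (Function.uncurry fun x ω => φ ω x) :=
    measurable_uncurry_of_continuous_of_measurable (fun ω => hcont ω) hmeas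
  have h1 : Measurable fun p : Ω × E × E => φ p.1 p.2.1 :=
    huu.comp (measurable_snd.fst.prodMk measurable_fst)
  have h2 : Measurable fun p : Ω × E × E => φ p.1 p.2.2 :=
    huu.comp (measurable_snd.snd.prodMk measurable_fst)
  exact measurableSet_le (h1.dist h2) measurable_const

/-- Freezing lemma: if the kernel `κ` is "independent" of the sub-σ-algebra `m2`
(in the sense of the product identity `hind` on a generating π-system), then on the
product σ-algebra `m2.prod mG` the measure `P ⊗ₘ κ` coincides with the product of `P`
with the intensity measure `P.bind κ`. -/
private lemma freeze_lemma {Ω G : Type} {m2 : MeasurableSpace Ω}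
    [mΩ : MeasurableSpace Ω] [mG : MeasurableSpace G]
    (P : Measure Ω) [IsProbabilityMeasure P] (hm2 : m2 ≤ mΩ)
    (κ : ProbabilityTheory.Kernel Ω G) [ProbabilityTheory.IsMarkovKernel κ]
    {pG : Set (Set G)} (hpG : IsPiSystem pG) (hpGm : ∀ B ∈ pG, MeasurableSet B)
    (hgen : MeasurableSpace.generateFrom pG = mG)
    (hspan : IsCountablySpanning pG)
    (hind : ∀ A : Set Ω, MeasurableSet[m2] A → ∀ B ∈ pG,
      ∫⁻ ω in A, κ ω B ∂P = P A * ∫⁻ ω, κ ω B ∂P)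
    {S : Set (Ω × G)} (hS : MeasurableSet[m2.prod mG] S) :
    (P ⊗ₘ κ) S = (P.prod (P.bind (fun ω => κ ω))) S := by
  have hκm : Measurable (fun ω => κ ω) := κ.measurable
  have hle : m2.prod mG ≤ (inferInstance : MeasurableSpace (Ω × G)) :=
    sup_le_sup (MeasurableSpace.comap_mono hm2) le_rfl
  haveI : IsProbabilityMeasure (P.bind (fun ω => κ ω)) := by
    constructor
    rw [Measure.bind_apply MeasurableSet.univ hκm.aemeasurable]
    simp
  haveI hfin1 : IsFiniteMeasure ((P ⊗ₘ κ).trim hle) := by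
    constructor
    rw [MeasureTheory.trim_measurableSet_eq hle MeasurableSet.univ]
    exact measure_lt_top _ _
  haveI hfin2 : IsFiniteMeasure ((P.prod (P.bind (fun ω => κ ω))).trim hle) := by
    constructor
    rw [MeasureTheory.trim_measurableSet_eq hle MeasurableSet.univ]
    exact measure_lt_top _ _
  have key : (P ⊗ₘ κ).trim hle = (P.prod (P.bind (fun ω => κ ω))).trim hle := by
    refine MeasureTheory.ext_of_generate_finite
      (Set.image2 (· ×ˢ ·) {A | MeasurableSet[m2] A} pG) ?_ ?_ ?_ ?_
    · have hgen2 := generateFrom_prod_eq (C := {A | MeasurableSet[m2] A}) (D := pG)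
        (@isCountablySpanning_measurableSet Ω m2) hspan
      rw [@MeasurableSpace.generateFrom_measurableSet Ω m2, hgen] at hgen2
      exact hgen2
    · exact (@isPiSystem_measurableSet Ω m2).prod hpG
    · rintro s ⟨A, hA, B, hB, rfl⟩
      have hBG : MeasurableSet B := hpGm B hB
      have hAB : MeasurableSet[m2.prod mG] (A ×ˢ B) :=
        @MeasurableSet.prod Ω G m2 mG _ _ hA hBG
      rw [MeasureTheory.trim_measurableSet_eq hle hAB,
        MeasureTheory.trim_measurableSet_eq hle hAB,
        Measure.compProd_apply_prod (hm2 _ hA) hBG, Measure.prod_prod,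
        Measure.bind_apply hBG hκm.aemeasurable]
      exact hind A hA B hB
    · rw [MeasureTheory.trim_measurableSet_eq hle MeasurableSet.univ,
        MeasureTheory.trim_measurableSet_eq hle MeasurableSet.univ]
      simp
  calc (P ⊗ₘ κ) S = (P ⊗ₘ κ).trim hle S :=
        (MeasureTheory.trim_measurableSet_eq hle hS).symm
    _ = (P.prod (P.bind (fun ω => κ ω))).trim hle S := by rw [key]
    _ = (P.prod (P.bind (fun ω => κ ω))) S := MeasureTheory.trim_measurableSet_eq hle hS

end AuxLemmas

/-- **Lemma (statistical equilibrium has atoms).** If a white-noise RDS on a complete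
separable metric space with invariant probability measure `ρ` satisfies weak local pointwise
stability on a Borel set `U` of positive `ρ`-measure, and `μ` is an `F_0`-measurable random
Borel probability measure with mean `ρ` which is equivariant under the flow, then it is not
the case that `(μ_ω ⊗ μ_ω)(Δ) = 0` almost surely; equivalently, with positive probability
`μ_ω` has an atom. -/
theorem statistical_equilibrium_has_atoms
    {Ω E : Type} [MeasurableSpace Ω] [MetricSpace E] [CompleteSpace E]
    [TopologicalSpace.SeparableSpace E] [MeasurableSpace E] [BorelSpace E]
    (R : WhiteNoiseRDS Ω E) (ρ : MeasureTheory.Measure E)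
    [MeasureTheory.IsProbabilityMeasure ρ]
    (hinv : R.Invariant ρ)
    (U : Set E) (hstab : R.WeakLocalPointwiseStabilityOn ρ U)
    (μ : Ω → MeasureTheory.Measure E)
    (hμ_prob : ∀ ω, MeasureTheory.IsProbabilityMeasure (μ ω))
    (hμ_meas : ∀ B : Set E, MeasurableSet B → Measurable[R.F0] fun ω => μ ω B)
    (hμ_mean : ∀ B : Set E, MeasurableSet B → ∫⁻ ω, μ ω B ∂ R.P = ρ B)
    (hμ_equiv : ∀ t : ℝ, 0 ≤ t → ∀ᵐ ω ∂ R.P,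
      (μ ω).map (R.φ t ω) = μ (R.θ t ω)) :
    ¬ (∀ᵐ ω ∂ R.P, ((μ ω).prod (μ ω)) (Set.diagonal E) = 0) := by
  intro hA
  haveI := R.P_prob
  haveI : SecondCountableTopology E :=
    UniformSpace.secondCountable_of_separable E
  obtain ⟨hU, hUpos, t, htmono, htto, hstab'⟩ := hstab
  -- shift the stability times so that they are all nonnegative
  obtain ⟨N, hN⟩ := Filter.eventually_atTop.mp (htto.eventually_ge_atTop 0)
  set T : ℕ → ℝ := fun n => t (n + N) with hT
  have hT0 : ∀ n, 0 ≤ T n := fun n => hN _ (Nat.le_add_left N n)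
  -- the random measure as a kernel
  have hμB : ∀ B : Set E, MeasurableSet B → Measurable fun ω => μ ω B :=
    fun B hB => (hμ_meas B hB).mono R.F0_le le_rfl
  have hμm : Measurable (fun ω => μ ω) :=
    Measure.measurable_of_measurable_coe _ hμB
  set κ0 : ProbabilityTheory.Kernel Ω E := ⟨μ, hμm⟩ with hκ0
  haveI : ProbabilityTheory.IsMarkovKernel κ0 := ⟨hμ_prob⟩
  set κ : ProbabilityTheory.Kernel Ω (E × E) := κ0 ×ₖ κ0 with hκdef
  have hκ : ∀ ω, κ ω = (μ ω).prod (μ ω) := fun ω =>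
    ProbabilityTheory.Kernel.prod_apply κ0 κ0 ω
  haveI : ProbabilityTheory.IsMarkovKernel κ := by rw [hκdef]; infer_instance
  set ν : Measure (E × E) := R.P.bind (fun ω => κ ω) with hνdef
  haveI : IsProbabilityMeasure ν := by
    constructor
    rw [hνdef, Measure.bind_apply MeasurableSet.univ κ.measurable.aemeasurable]
    simp
  -- closed neighbourhoods of the diagonal
  set D : ℝ → Set (E × E) := fun η => {z | dist z.1 z.2 ≤ η} with hD
  have hDm : ∀ η, MeasurableSet (D η) :=
    fun η => measurableSet_le measurable_dist measurable_const
  set c : ℝ → ℝ≥0∞ := fun η => ∫⁻ ω, κ ω (D η) ∂ R.P with hc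
  -- Step A : c (1/(k+1)) → 0 using the assumed a.s. nullity of the diagonal
  have hc0 : Filter.Tendsto (fun k : ℕ => c (1 / ((k : ℝ) + 1))) Filter.atTop (𝓝 0) := by
    have hmeasF : ∀ k : ℕ, Measurable fun ω => κ ω (D (1 / ((k : ℝ) + 1))) :=
      fun k => ProbabilityTheory.Kernel.measurable_coe κ (hDm _)
    have htend := MeasureTheory.tendsto_lintegral_of_dominated_convergence
      (μ := R.P) (F := fun k ω => κ ω (D (1 / ((k : ℝ) + 1)))) (f := fun _ => 0)
      (fun _ => (1 : ℝ≥0∞)) hmeasF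
      (fun k => Filter.Eventually.of_forall fun ω => prob_le_one) (by simp) ?_
    · simpa using htend
    · filter_upwards [hA] with ω hω
      have hanti : Antitone fun k : ℕ => D (1 / ((k : ℝ) + 1)) := by
        intro i j hij z hz
        have hij' : ((i : ℝ) + 1) ≤ (j : ℝ) + 1 := by
          have := (Nat.cast_le (α := ℝ)).mpr hij; linarith
        refine le_trans hz (one_div_le_one_div_of_le (by positivity) hij')
      have h2 := MeasureTheory.tendsto_measure_iInter_atTop (μ := κ ω)
        (s := fun k : ℕ => D (1 / ((k : ℝ) + 1)))
        (fun k => (hDm _).nullMeasurableSet) hanti ⟨0, measure_ne_top _ _⟩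
      have h3 : ⋂ k : ℕ, D (1 / ((k : ℝ) + 1)) = Set.diagonal E := by
        ext z
        simp only [Set.mem_iInter, hD, Set.mem_setOf_eq, Set.mem_diagonal_iff]
        constructor
        · intro h
          have h0 : dist z.1 z.2 ≤ 0 :=
            ge_of_tendsto' tendsto_one_div_add_atTop_nhds_zero_nat fun k => h k
          exact dist_le_zero.mp h0
        · intro h k
          rw [show z.1 = z.2 from h]
          simp [dist_self]
          positivity
      have h4 : κ ω (Set.diagonal E) = 0 := by rw [hκ ω]; exact hω
      rw [h3, h4] at h2
      exact h2
  -- the two-point motion events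
  set S : ℝ → ℝ → Set (Ω × (E × E)) :=
    fun t0 η => {p | dist (R.φ t0 p.1 p.2.1) (R.φ t0 p.1 p.2.2) ≤ η} with hS
  have hSsub : ∀ t0 : ℝ, 0 ≤ t0 → ∀ η : ℝ,
      MeasurableSet[(R.F 0 t0).prod (inferInstance : MeasurableSpace (E × E))]
        (S t0 η) :=
    fun t0 ht0 η => @S_measurable Ω E (R.F 0 t0) _ _ _ _ (R.φ t0)
      (R.φ_cont t0 ht0) (fun x => R.φ_adapted t0 ht0 x) η
  have hle2 : ∀ t0 : ℝ,
      (R.F 0 t0).prod (inferInstance : MeasurableSpace (E × E)) ≤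
        (inferInstance : MeasurableSpace (Ω × (E × E))) :=
    fun t0 => sup_le_sup (MeasurableSpace.comap_mono (R.F_le 0 t0)) le_rfl
  have hSfull : ∀ t0 : ℝ, 0 ≤ t0 → ∀ η : ℝ, MeasurableSet (S t0 η) :=
    fun t0 ht0 η => hle2 t0 _ (hSsub t0 ht0 η)
  -- Step B : the freezing identity. For every n and η > 0,
  -- c η = ∫⁻ z, P {ω' | (ω', z) ∈ S (T n) η} dν.
  have key : ∀ (n : ℕ) (η : ℝ), 0 < η →
      c η = ∫⁻ z, R.P {ω' | (ω', z) ∈ S (T n) η} ∂ν := by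
    intro n η hη
    have ht0 := hT0 n
    set t0 := T n with ht0def
    have hSm2 := hSsub t0 ht0 η
    have hSm : MeasurableSet (S t0 η) := hSfull t0 ht0 η
    -- B1 : equivariance turns the left side of the freezing identity into c η
    have hstep1 : ∫⁻ ω, κ ω (Prod.mk ω ⁻¹' S t0 η) ∂ R.P = c η := by
      have hφm : ∀ ω, Measurable (R.φ t0 ω) := fun ω => (R.φ_cont t0 ht0 ω).measurable
      have hae : (fun ω => κ ω (Prod.mk ω ⁻¹' S t0 η)) =ᵐ[R.P]
          fun ω => κ (R.θ t0 ω) (D η) := by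
        filter_upwards [hμ_equiv t0 ht0] with ω hω
        have hpre : Prod.mk ω ⁻¹' S t0 η
            = Prod.map (R.φ t0 ω) (R.φ t0 ω) ⁻¹' D η := rfl
        haveI : IsProbabilityMeasure ((μ ω).map (R.φ t0 ω)) :=
          Measure.isProbabilityMeasure_map (hφm ω).aemeasurable
        calc κ ω (Prod.mk ω ⁻¹' S t0 η)
            = ((μ ω).prod (μ ω)) (Prod.map (R.φ t0 ω) (R.φ t0 ω) ⁻¹' D η) := by
              rw [hκ ω, hpre]
          _ = (((μ ω).prod (μ ω)).map (Prod.map (R.φ t0 ω) (R.φ t0 ω))) (D η) :=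
              (Measure.map_apply ((hφm ω).prodMap (hφm ω)) (hDm η)).symm
          _ = (((μ ω).map (R.φ t0 ω)).prod ((μ ω).map (R.φ t0 ω))) (D η) := by
              rw [Measure.map_prod_map _ _ (hφm ω) (hφm ω)]
          _ = ((μ (R.θ t0 ω)).prod (μ (R.θ t0 ω))) (D η) := by rw [hω]
          _ = κ (R.θ t0 ω) (D η) := by rw [hκ (R.θ t0 ω)]
      rw [lintegral_congr_ae hae]
      exact (R.θ_preserves t0).lintegral_comp
        (ProbabilityTheory.Kernel.measurable_coe κ (hDm η))
    -- B2 : the freezing identity itself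
    have hstep2 : (R.P ⊗ₘ κ) (S t0 η) = (R.P.prod ν) (S t0 η) := by
      refine freeze_lemma R.P (R.F_le 0 t0) κ
        isPiSystem_prod ?_
        generateFrom_prod
        (IsCountablySpanning.prod isCountablySpanning_measurableSet
          isCountablySpanning_measurableSet)
        ?_ hSm2
      · rintro B ⟨B1, hB1, B2, hB2, rfl⟩
        exact (hB1 : MeasurableSet B1).prod hB2
      · rintro A hA B ⟨B1, hB1, B2, hB2, rfl⟩
        have hB1' : MeasurableSet B1 := hB1
        have hB2' : MeasurableSet B2 := hB2
        have hAfull : MeasurableSet A := R.F_le 0 t0 _ hA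
        have heq : ∀ ω, κ ω (B1 ×ˢ B2) = μ ω B1 * μ ω B2 := fun ω => by
          rw [hκ ω, Measure.prod_prod]
        have hg : Measurable[R.F0] fun ω => μ ω B1 * μ ω B2 :=
          (hμ_meas B1 hB1').mul (hμ_meas B2 hB2')
        have hf : Measurable[R.F 0 t0] (A.indicator fun _ => (1 : ℝ≥0∞)) :=
          measurable_const.indicator hA
        simp_rw [heq]
        rw [← lintegral_indicator hAfull]
        have hmul : ∀ ω, A.indicator (fun ω' => μ ω' B1 * μ ω' B2) ω
            = A.indicator (fun _ => (1 : ℝ≥0∞)) ω * (μ ω B1 * μ ω B2) := by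
          intro ω; by_cases h : ω ∈ A <;> simp [h]
        simp_rw [hmul]
        rw [ProbabilityTheory.lintegral_mul_eq_lintegral_mul_lintegral_of_independent_measurableSpace
          (R.F_le 0 t0) R.F0_le ((R.indep_F0 ht0).symm) hf hg]
        congr 1
        rw [lintegral_indicator hAfull]
        simp
    -- combine
    calc c η = ∫⁻ ω, κ ω (Prod.mk ω ⁻¹' S t0 η) ∂ R.P := hstep1.symm
      _ = (R.P ⊗ₘ κ) (S t0 η) := (Measure.compProd_apply hSm).symm
      _ = (R.P.prod ν) (S t0 η) := hstep2
      _ = ∫⁻ z, R.P ((fun ω' => (ω', z)) ⁻¹' S t0 η) ∂ν :=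
          Measure.prod_apply_symm hSm
      _ = ∫⁻ z, R.P {ω' | (ω', z) ∈ S t0 η} ∂ν := rfl
  -- Step C : Fatou and the stability lower bound
  set q : ℕ → ℝ → (E × E) → ℝ≥0∞ :=
    fun n η z => R.P {ω' | (ω', z) ∈ S (T n) η} with hq
  have hqm : ∀ (n : ℕ) (η : ℝ), 0 < η → Measurable (q n η) := fun n η hη =>
    measurable_measure_prodMk_right (hSfull (T n) (hT0 n) η)
  set L : ℕ → (E × E) → ℝ≥0∞ :=
    fun k z => Filter.liminf (fun n => q n (1 / ((k : ℝ) + 1)) z) Filter.atTop with hL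
  have hηk : ∀ k : ℕ, (0 : ℝ) < 1 / ((k : ℝ) + 1) := fun k => by positivity
  have hLm : ∀ k, Measurable (L k) := fun k =>
    Measurable.liminf fun n => hqm n _ (hηk k)
  set Df : (E × E) → ℝ≥0∞ := fun z => ⨅ k : ℕ, L k z with hDf
  have hDfm : Measurable Df := Measurable.iInf hLm
  set ind : (E × E) → ℝ≥0∞ := (U ×ˢ U).indicator Df with hind
  have hindm : Measurable ind := hDfm.indicator (hU.prod hU)
  -- J ≤ c (1/(k+1)) for every k
  have hJle : ∀ k : ℕ, ∫⁻ z, ind z ∂ν ≤ c (1 / ((k : ℝ) + 1)) := by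
    intro k
    have h1 : ∫⁻ z, ind z ∂ν ≤ ∫⁻ z, L k z ∂ν := by
      refine lintegral_mono fun z => ?_
      exact le_trans (Set.indicator_le_self' (fun _ _ => zero_le) z) (iInf_le _ k)
    have h2 : ∫⁻ z, L k z ∂ν ≤
        Filter.liminf (fun n => ∫⁻ z, q n (1 / ((k : ℝ) + 1)) z ∂ν) Filter.atTop :=
      lintegral_liminf_le fun n => hqm n _ (hηk k)
    have h3 : ∀ n : ℕ, ∫⁻ z, q n (1 / ((k : ℝ) + 1)) z ∂ν = c (1 / ((k : ℝ) + 1)) :=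
      fun n => (key n _ (hηk k)).symm
    calc ∫⁻ z, ind z ∂ν ≤ ∫⁻ z, L k z ∂ν := h1
      _ ≤ Filter.liminf (fun n => ∫⁻ z, q n (1 / ((k : ℝ) + 1)) z ∂ν) Filter.atTop := h2
      _ = c (1 / ((k : ℝ) + 1)) := by simp only [h3]; exact Filter.liminf_const _
  have hJ0 : ∫⁻ z, ind z ∂ν = 0 :=
    le_antisymm (ge_of_tendsto' hc0 hJle) zero_le
  -- positivity of Df on U ×ˢ U from the stability hypothesis
  have hDfpos : ∀ z ∈ U ×ˢ U, 0 < Df z := by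
    rintro ⟨x, y⟩ ⟨hx, hy⟩
    obtain ⟨δ, hδpos, hδ⟩ := hstab' x hx y hy
    refine lt_of_lt_of_le hδpos (le_iInf fun k => ?_)
    have h1 := hδ _ (hηk k)
    have hsh : L k (x, y) = Filter.liminf
        (fun m => R.P {ω | dist (R.φ (t m) ω x) (R.φ (t m) ω y) ≤ 1 / ((k : ℝ) + 1)})
        Filter.atTop := by
      show Filter.liminf
        (fun n => (fun m => R.P {ω | dist (R.φ (t m) ω x) (R.φ (t m) ω y)
          ≤ 1 / ((k : ℝ) + 1)}) (n + N)) Filter.atTop = _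
      exact liminf_shift_aux
        (fun m => R.P {ω | dist (R.φ (t m) ω x) (R.φ (t m) ω y) ≤ 1 / ((k : ℝ) + 1)}) N
    rw [hsh]
    exact h1
  -- From J = 0 conclude κ ω (U ×ˢ U) = 0 a.s.
  have hbind : ∫⁻ ω, ∫⁻ z, ind z ∂κ ω ∂ R.P = 0 := by
    rw [← Measure.lintegral_bind κ.measurable.aemeasurable hindm.aemeasurable]
    exact hJ0
  have hinner_m : Measurable fun ω => ∫⁻ z, ind z ∂κ ω :=
    Measurable.lintegral_kernel_prod_right (κ := κ) (hindm.comp measurable_snd)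
  have hae0 : ∀ᵐ ω ∂ R.P, ∫⁻ z, ind z ∂κ ω = 0 :=
    (lintegral_eq_zero_iff hinner_m).mp hbind
  have haeU : ∀ᵐ ω ∂ R.P, κ ω (U ×ˢ U) = 0 := by
    filter_upwards [hae0] with ω hω
    have h1 : ind =ᵐ[κ ω] 0 := (lintegral_eq_zero_iff hindm).mp hω
    have h2 : κ ω {z | ind z ≠ 0} = 0 := by
      have := h1
      rw [Filter.EventuallyEq, MeasureTheory.ae_iff] at this
      simpa using this
    refine measure_mono_null ?_ h2
    rintro ⟨x, y⟩ hxy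
    have hpos := hDfpos (x, y) hxy
    simp only [Set.mem_setOf_eq, hind, Set.indicator_of_mem hxy]
    exact hpos.ne'
  have hUU0 : ∫⁻ ω, μ ω U * μ ω U ∂ R.P = 0 := by
    have heq : (fun ω => μ ω U * μ ω U) =ᵐ[R.P] fun _ => 0 := by
      filter_upwards [haeU] with ω hω
      rw [hκ ω, Measure.prod_prod] at hω
      exact hω
    rw [lintegral_congr_ae heq]
    simp
  have haeμU : ∀ᵐ ω ∂ R.P, μ ω U = 0 := by
    have := (lintegral_eq_zero_iff ((hμB U hU).mul (hμB U hU))).mp hUU0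
    filter_upwards [this] with ω hω
    rcases mul_eq_zero.mp hω with h | h <;> exact h
  have hρU : ρ U = 0 := by
    rw [← hμ_mean U hU, lintegral_congr_ae (haeμU.mono fun ω h => h)]
    simp
  exact absurd hρU hUpos.ne'
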